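/- Every k-tree can be grown from any of its k-cliques; that is, for any k-clique K of a k-tree G, there is a perfect elimination ordering of G whose first k vertices are exactly the vertices of K. -/

import Mathlib

open SimpleGraph

/-- A finite-style graph: a subgraph of the complete graph on `ℕ`,
i.e. a graph together with its vertex set `verts ⊆ ℕ`. -/
abbrev FGraph := SimpleGraph.Subgraph (⊤ : SimpleGraph ℕ)

/-- The complete graph on the vertex set `s`. -/
def cliqueGraph (s : Finset ℕ) : FGraph where
  verts := ↑s
  Adj u v := u ∈ s ∧ v ∈ s ∧ u ≠ v
  adj_sub h := h.2.2
  edge_vert h := h.1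
  symm := ⟨fun u v h => ⟨h.2.1, h.1, h.2.2.symm⟩⟩

/-- Add a new vertex `v` to `G`, joined to the vertices of `s` (which are in `G`). -/
def addVertex (G : FGraph) (v : ℕ) (s : Finset ℕ) : FGraph where
  verts := insert v G.verts
  Adj x y := G.Adj x y ∨ (x = v ∧ y ≠ v ∧ y ∈ s ∧ y ∈ G.verts)
    ∨ (y = v ∧ x ≠ v ∧ x ∈ s ∧ x ∈ G.verts)
  adj_sub h := by
    rcases h with h | h | h
    · exact G.adj_sub h
    · exact fun e => h.2.1 (by rw [← e, h.1])
    · exact fun e => h.2.1 (by rw [e, h.1])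
  edge_vert h := by
    rcases h with h | h | h
    · exact Set.mem_insert_of_mem _ (G.edge_vert h)
    · exact h.1 ▸ Set.mem_insert _ _
    · exact Set.mem_insert_of_mem _ h.2.2.2
  symm := ⟨fun x y h => by
    rcases h with h | h | h
    · exact Or.inl (G.symm.symm _ _ h)
    · exact Or.inr (Or.inr h)
    · exact Or.inr (Or.inl h)⟩

/-- `s` is a clique (of pairwise adjacent vertices) in `G`. -/
def IsCliqueIn (G : FGraph) (s : Finset ℕ) : Prop :=
  ↑s ⊆ G.verts ∧ ∀ u ∈ s, ∀ v ∈ s, u ≠ v → G.Adj u v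

/-- `k`-trees: start from a `k`-clique and repeatedly add a vertex joined to an
existing `k`-clique. -/
inductive IsKTree (k : ℕ) : FGraph → Prop
  | base (s : Finset ℕ) (hs : s.card = k) : IsKTree k (cliqueGraph s)
  | grow (G : FGraph) (hG : IsKTree k G) (s : Finset ℕ) (hs : s.card = k)
      (hclique : IsCliqueIn G s) (v : ℕ) (hv : v ∉ G.verts) :
      IsKTree k (addVertex G v s)

/-- A partial `k`-tree is a subgraph of a `k`-tree. -/
def IsPartialKTree (k : ℕ) (G : FGraph) : Prop := ∃ H : FGraph, IsKTree k H ∧ G ≤ H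

/-- Add the single edge `uv` (and its endpoints) to `G`. -/
def addEdge (G : FGraph) (u v : ℕ) : FGraph where
  verts := insert u (insert v G.verts)
  Adj x y := G.Adj x y ∨ (x = u ∧ y = v ∧ u ≠ v) ∨ (x = v ∧ y = u ∧ u ≠ v)
  adj_sub h := by
    rcases h with h | h | h
    · exact G.adj_sub h
    · exact fun e => h.2.2 (by rw [← h.1, ← h.2.1, e])
    · exact fun e => h.2.2 (by rw [← h.1, ← h.2.1, e])
  edge_vert h := by
    rcases h with h | h | h
    · exact Set.mem_insert_of_mem _ (Set.mem_insert_of_mem _ (G.edge_vert h))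
    · exact h.1 ▸ Set.mem_insert _ _
    · exact h.1 ▸ Set.mem_insert_of_mem _ (Set.mem_insert _ _)
  symm := ⟨fun x y h => by
    rcases h with h | h | h
    · exact Or.inl (G.symm.symm _ _ h)
    · exact Or.inr (Or.inr ⟨h.2.1, h.1, h.2.2⟩)
    · exact Or.inr (Or.inl ⟨h.2.1, h.1, h.2.2⟩)⟩

/-- `G` is a minor of `H`: there are pairwise disjoint nonempty connected branch sets
in `H`, one for each vertex of `G`, with an `H`-edge between the branch sets of any
two `G`-adjacent vertices. -/
def IsMinor (G H : FGraph) : Prop :=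
  ∃ β : ℕ → Finset ℕ,
    (∀ u ∈ G.verts, (β u).Nonempty ∧ ↑(β u) ⊆ H.verts ∧ (H.induce ↑(β u)).coe.Connected) ∧
    (∀ u ∈ G.verts, ∀ v ∈ G.verts, u ≠ v → Disjoint (β u) (β v)) ∧
    (∀ u v, G.Adj u v → ∃ x ∈ β u, ∃ y ∈ β v, H.Adj x y)

/-- The complete graph `K₅`. -/
def K5g : FGraph := cliqueGraph {0, 1, 2, 3, 4}

/-- The complete bipartite graph `K₃,₃` with parts `{0,1,2}` and `{3,4,5}`. -/
def K33g : FGraph where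
  verts := {n : ℕ | n < 6}
  Adj u v := (u < 3 ∧ 3 ≤ v ∧ v < 6) ∨ (v < 3 ∧ 3 ≤ u ∧ u < 6)
  adj_sub := fun {u v} h => by rcases h with h | h <;> exact show u ≠ v by omega
  edge_vert := fun {u v} h => by rcases h with h | h <;> exact show u < 6 by omega
  symm := ⟨fun u v h => by tauto⟩

/-- Planarity via Wagner's theorem: no `K₅` and no `K₃,₃` minor. -/
def Planar (G : FGraph) : Prop := ¬ IsMinor K5g G ∧ ¬ IsMinor K33g G

/-- In a maximal planar graph (planar triangulation), the triangle `abc` bounds a face: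
combinatorially, a new vertex can be placed inside it and joined to `a`, `b`, `c`
while preserving planarity. -/
def IsFaceTriangle (G : FGraph) (a b c : ℕ) : Prop :=
  G.Adj a b ∧ G.Adj b c ∧ G.Adj a c ∧
  ∀ v, v ∉ G.verts → Planar (addVertex G v {a, b, c})

/-- A perfect elimination scheme witnessing that `H` is a `k`-tree: a listing of the
vertices of `H` whose first `k` entries form a clique and each later entry has exactly
`k` earlier neighbours, which form a clique. -/
def IsPESk (k : ℕ) (l : List ℕ) (H : FGraph) : Prop :=
  l.Nodup ∧ H.verts = {v | v ∈ l} ∧ k ≤ l.length ∧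
  (∀ i j : Fin l.length, (i : ℕ) < k → (j : ℕ) < k → i ≠ j → H.Adj (l.get i) (l.get j)) ∧
  (∀ i : Fin l.length, k ≤ (i : ℕ) →
    ∃ s : Finset (Fin l.length), s.card = k ∧ (∀ j ∈ s, (j : ℕ) < (i : ℕ)) ∧
      (∀ a ∈ s, ∀ b ∈ s, a ≠ b → H.Adj (l.get a) (l.get b)) ∧
      (∀ j : Fin l.length, (j : ℕ) < (i : ℕ) → (H.Adj (l.get j) (l.get i) ↔ j ∈ s)))

/-- A vertex is simplicial if its neighbourhood induces a clique. -/
def IsSimplicial (G : FGraph) (v : ℕ) : Prop :=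
  v ∈ G.verts ∧ ∀ u w, G.Adj v u → G.Adj v w → u ≠ w → G.Adj u w

/-- A graph is chordal if it has no induced cycle of length greater than 3. -/
def IsChordal (G : FGraph) : Prop :=
  ∀ n : ℕ, 4 ≤ n → ¬ ∃ f : Fin n → ℕ, Function.Injective f ∧ (∀ i, f i ∈ G.verts) ∧
    ∀ i j : Fin n, G.Adj (f i) (f j) ↔ ((i : ℕ) + 1) % n = (j : ℕ) ∨ ((j : ℕ) + 1) % n = (i : ℕ)

/-- A (general) perfect elimination scheme: an ordering of the vertices such that each
vertex is simplicial in the subgraph induced by it and the earlier vertices. -/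
def IsPES (l : List ℕ) (G : FGraph) : Prop :=
  l.Nodup ∧ G.verts = {v | v ∈ l} ∧
  ∀ i : Fin l.length, IsSimplicial (G.induce {v | v ∈ l.take ((i : ℕ) + 1)}) (l.get i)

/-- `G` can be reduced to the empty graph by repeatedly deleting simplicial vertices. -/
inductive Reducible : FGraph → Prop
  | empty (G : FGraph) (h : G.verts = ∅) : Reducible G
  | delete (G : FGraph) (v : ℕ) (hv : IsSimplicial G v)
      (h : Reducible (G.deleteVerts {v})) : Reducible G

/-- `G` is 3-connected: at least 4 vertices, and deleting any two vertices leaves it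
connected. -/
def ThreeConnected (G : FGraph) : Prop :=
  4 ≤ G.verts.ncard ∧ ∀ S : Finset ℕ, S.card ≤ 2 → (G.deleteVerts ↑S).Connected

/-- `G` has a tree decomposition of width at most `k`. -/
def HasTreewidthLE (G : FGraph) (k : ℕ) : Prop :=
  ∃ (ι : Type) (T : SimpleGraph ι) (B : ι → Finset ℕ),
    T.Connected ∧ T.IsAcyclic ∧
    (∀ v ∈ G.verts, ∃ i, v ∈ B i) ∧
    (∀ u v, G.Adj u v → ∃ i, u ∈ B i ∧ v ∈ B i) ∧
    (∀ v ∈ G.verts, (SimpleGraph.induce {i | v ∈ B i} T).Connected) ∧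
    (∀ i, (B i).card ≤ k + 1)

/-- `G` is acyclic (a forest). -/
def AcyclicFG (G : FGraph) : Prop := G.coe.IsAcyclic

/-- `G` is a complete graph on its vertex set. -/
def CompleteFG (G : FGraph) : Prop := ∀ u ∈ G.verts, ∀ v ∈ G.verts, u ≠ v → G.Adj u v

/-- The path on the three vertices `0, 1, 2`. -/
def P3 : FGraph := addEdge (addEdge (cliqueGraph ∅) 0 1) 1 2


/-- Auxiliary, value-based formulation of a perfect elimination scheme. -/
def PESAux (k : ℕ) (l : List ℕ) (H : FGraph) : Prop :=
  l.Nodup ∧ H.verts = {v | v ∈ l} ∧ k ≤ l.length ∧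
  (∀ u ∈ l.take k, ∀ w ∈ l.take k, u ≠ w → H.Adj u w) ∧
  ∀ i, (hi : i < l.length) → k ≤ i →
    ∃ t : Finset ℕ, t.card = k ∧ (∀ x, x ∈ t ↔ x ∈ l.take i ∧ H.Adj x (l[i]'hi)) ∧
      ∀ a ∈ t, ∀ b ∈ t, a ≠ b → H.Adj a b

lemma getElem_mem_take_iff {l : List ℕ} (hl : l.Nodup) {i j : ℕ} (hj : j < l.length) :
    l[j] ∈ l.take i ↔ j < i := by
  constructor
  · intro h
    obtain ⟨m, hm, hme⟩ := List.mem_iff_getElem.mp h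
    have hm' : m < i ⊓ l.length := by simpa [List.length_take] using hm
    have hml : m < l.length := lt_of_lt_of_le hm' inf_le_right
    rw [List.getElem_take] at hme
    have : m = j := (hl.getElem_inj_iff).mp hme
    omega
  · intro h
    have hjt : j < (l.take i).length := by simp [List.length_take]; omega
    have : l[j] = (l.take i)[j]'hjt := List.getElem_take.symm
    rw [this]
    exact List.getElem_mem _

lemma PESAux.isPESk {k : ℕ} {l : List ℕ} {H : FGraph} (h : PESAux k l H) : IsPESk k l H := by
  classical
  obtain ⟨hnd, hv, hlen, hcl, hwit⟩ := h
  refine ⟨hnd, hv, hlen, ?_, ?_⟩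
  · intro i j hi hj hij
    apply hcl
    · rw [List.get_eq_getElem]
      exact (getElem_mem_take_iff hnd i.isLt).mpr hi
    · rw [List.get_eq_getElem]
      exact (getElem_mem_take_iff hnd j.isLt).mpr hj
    · simp only [List.get_eq_getElem]
      intro e
      exact hij (Fin.ext (hnd.getElem_inj_iff.mp e))
  · intro i hik
    obtain ⟨t, htc, htch, htcl⟩ := hwit i i.isLt hik
    refine ⟨Finset.univ.filter (fun j : Fin l.length => l.get j ∈ t), ?_, ?_, ?_, ?_⟩
    · rw [← htc]
      apply Finset.card_bij (fun (j : Fin l.length) _ => l.get j)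
      · intro a ha
        exact (Finset.mem_filter.mp ha).2
      · intro a _ b _ e
        simp only [List.get_eq_getElem] at e
        exact Fin.ext (hnd.getElem_inj_iff.mp e)
      · intro x hx
        have hx' := (htch x).mp hx
        have hxl : x ∈ l := List.take_subset _ _ hx'.1
        obtain ⟨m, hml, hme⟩ := List.mem_iff_getElem.mp hxl
        exact ⟨⟨m, hml⟩, Finset.mem_filter.mpr ⟨Finset.mem_univ _, by simpa using hme ▸ hx⟩, by simpa using hme⟩
    · intro j hj
      have h1 : l.get j ∈ t := (Finset.mem_filter.mp hj).2
      have h2 := ((htch _).mp h1).1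
      rw [List.get_eq_getElem] at h2
      exact (getElem_mem_take_iff hnd j.isLt).mp h2
    · intro a ha b hb hab
      apply htcl _ (Finset.mem_filter.mp ha).2 _ (Finset.mem_filter.mp hb).2
      simp only [List.get_eq_getElem]
      intro e
      exact hab (Fin.ext (hnd.getElem_inj_iff.mp e))
    · intro j hji
      simp only [Finset.mem_filter, Finset.mem_univ, true_and]
      rw [htch]
      simp only [List.get_eq_getElem]
      constructor
      · intro hadj
        exact ⟨(getElem_mem_take_iff hnd j.isLt).mpr hji, hadj⟩
      · intro h2
        exact h2.2

lemma addVertex_adj_iff {G : FGraph} {v : ℕ} {s : Finset ℕ} {x y : ℕ} (hx : x ≠ v) (hy : y ≠ v) :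
    (addVertex G v s).Adj x y ↔ G.Adj x y := by
  constructor
  · rintro (h | h | h)
    · exact h
    · exact absurd h.1 hx
    · exact absurd h.1 hy
  · exact Or.inl

lemma addVertex_adj_right {G : FGraph} {v : ℕ} {s : Finset ℕ} (hv : v ∉ G.verts)
    (hs : ↑s ⊆ G.verts) (x : ℕ) : (addVertex G v s).Adj x v ↔ x ∈ s := by
  constructor
  · rintro (h | h | h)
    · exact absurd (G.edge_vert h.symm) hv
    · exact absurd rfl h.2.1
    · exact h.2.2.1
  · intro hxs
    have hxv : x ∈ G.verts := hs hxs
    exact Or.inr (Or.inr ⟨rfl, fun e => hv (e ▸ hxv), hxs, hxv⟩)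

lemma addVertex_adj_left {G : FGraph} {v : ℕ} {s : Finset ℕ} (hv : v ∉ G.verts)
    (hs : ↑s ⊆ G.verts) (x : ℕ) : (addVertex G v s).Adj v x ↔ x ∈ s := by
  rw [SimpleGraph.Subgraph.adj_comm]
  exact addVertex_adj_right hv hs x

theorem ktree_grown_from_any_clique (k : ℕ) (G : FGraph) (hG : IsKTree k G)
    (K : Finset ℕ) (hcard : K.card = k) (hclique : IsCliqueIn G K) :
    ∃ l : List ℕ, IsPESk k l G ∧ (l.take k).toFinset = K := by
  suffices h : ∀ K : Finset ℕ, K.card = k → IsCliqueIn G K →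
      ∃ l : List ℕ, PESAux k l G ∧ (l.take k).toFinset = K by
    obtain ⟨l, hl, hK⟩ := h K hcard hclique
    exact ⟨l, hl.isPESk, hK⟩
  clear hcard hclique
  clear K
  induction hG with
  | base s hs =>
    intro K hcard hclique
    have hKs : K = s := by
      apply Finset.eq_of_subset_of_card_le
      · intro x hx
        exact hclique.1 hx
      · rw [hcard, hs]
    subst hKs
    refine ⟨K.toList, ⟨K.nodup_toList, ?_, ?_, ?_, ?_⟩, ?_⟩
    · show (↑K : Set ℕ) = _
      ext x
      simp
    · simp [Finset.length_toList, hcard]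
    · intro a ha b hb hab
      have ha' : a ∈ K := by
        have := List.take_subset _ _ ha
        simpa using this
      have hb' : b ∈ K := by
        have := List.take_subset _ _ hb
        simpa using this
      exact ⟨ha', hb', hab⟩
    · intro i hi hik
      exfalso
      rw [Finset.length_toList, hcard] at hi
      omega
    · rw [List.take_of_length_le (by simp [Finset.length_toList, hcard])]
      exact Finset.toList_toFinset K
  | grow G hG s hs hscl v hv ih =>
    intro K hcard hKcl
    have hsv : ↑s ⊆ G.verts := hscl.1
    have hvr : ∀ x, (addVertex G v s).Adj x v ↔ x ∈ s := addVertex_adj_right hv hsv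
    have hvl' : ∀ x, (addVertex G v s).Adj v x ↔ x ∈ s := addVertex_adj_left hv hsv
    by_cases hvK : v ∈ K
    · -- v ∈ K
      have hk1 : 1 ≤ k := hcard ▸ Finset.card_pos.mpr ⟨v, hvK⟩
      set K' := K.erase v with hK'def
      have hK'c : K'.card = k - 1 := by rw [hK'def, Finset.card_erase_of_mem hvK, hcard]
      have hK's : K' ⊆ s := by
        intro x hx
        have hxK : x ∈ K := Finset.mem_of_mem_erase hx
        have hxv : x ≠ v := Finset.ne_of_mem_erase hx
        exact (hvr x).mp (hKcl.2 x hxK v hvK hxv)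
      obtain ⟨u, hu⟩ := Finset.card_eq_one.mp
        (show (s \ K').card = 1 by rw [Finset.card_sdiff_of_subset hK's, hs, hK'c]; omega)
      have hus' : u ∈ s := (Finset.mem_sdiff.mp (hu ▸ Finset.mem_singleton_self u)).1
      have huK' : u ∉ K' := (Finset.mem_sdiff.mp (hu ▸ Finset.mem_singleton_self u)).2
      have hsK' : ∀ x, x ∈ s ↔ x = u ∨ x ∈ K' := by
        intro x
        constructor
        · intro hxs
          by_cases hxK' : x ∈ K'
          · exact Or.inr hxK'
          · have hm : x ∈ s \ K' := Finset.mem_sdiff.mpr ⟨hxs, hxK'⟩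
            rw [hu] at hm
            exact Or.inl (Finset.mem_singleton.mp hm)
        · rintro (rfl | hx)
          · exact hus'
          · exact hK's hx
      obtain ⟨l, ⟨hnd, hverts, hlen, hcl, hwit⟩, htake⟩ := ih s hs hscl
      have hvl : v ∉ l := fun h => hv (by rw [hverts]; exact h)
      set p := l.take k with hpdef
      set r := l.drop k with hrdef
      have hpr : p ++ r = l := List.take_append_drop k l
      have hplen : p.length = k := by rw [hpdef, List.length_take]; omega
      have hndpr : (p ++ r).Nodup := by rw [hpr]; exact hnd
      have hndp : p.Nodup := hndpr.of_append_left
      have hndr : r.Nodup := hndpr.of_append_right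
      have hdisj : p.Disjoint r := List.disjoint_of_nodup_append hndpr
      have hpf : ∀ x, x ∈ p ↔ x ∈ s := by
        intro x
        rw [← List.mem_toFinset, htake]
      have hup : u ∈ p := (hpf u).mpr hus'
      set q := p.erase u with hqdef
      have hqlen : q.length = k - 1 := by rw [hqdef, List.length_erase_of_mem hup, hplen]
      have hqmem : ∀ x, x ∈ q ↔ x ≠ u ∧ x ∈ p := fun x => hndp.mem_erase_iff
      have hllen : l.length = k + r.length := by rw [← hpr]; simp [hplen]
      set L := q ++ v :: u :: r with hLdef
      have hLlen : L.length = l.length + 1 := by simp [hLdef]; omega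
      have htakek : L.take k = q ++ [v] := by
        have h1 : L = (q ++ [v]) ++ (u :: r) := by simp [hLdef]
        have h2 : (q ++ [v]).length = k := by simp [hqlen]; omega
        rw [h1, ← h2, List.take_left]
      have hKiff : ∀ x, x ∈ K ↔ x = v ∨ x ∈ K' := by
        intro x
        constructor
        · intro hx
          by_cases hxv : x = v
          · exact Or.inl hxv
          · exact Or.inr (Finset.mem_erase.mpr ⟨hxv, hx⟩)
        · rintro (rfl | hx)
          · exact hvK
          · exact Finset.mem_of_mem_erase hx
      have hKtake : ∀ x, x ∈ L.take k ↔ x ∈ K := by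
        intro x
        rw [htakek]
        simp only [List.mem_append, List.mem_singleton]
        rw [hqmem x, hpf x, hsK' x, hKiff x]
        constructor
        · rintro (⟨hxu, (rfl | hxK')⟩ | rfl)
          · exact absurd rfl hxu
          · exact Or.inr hxK'
          · exact Or.inl rfl
        · rintro (rfl | hxK')
          · exact Or.inr rfl
          · exact Or.inl ⟨fun e => huK' (e ▸ hxK'), Or.inr hxK'⟩
      have hvners : v ∉ r := fun h => hvl (by rw [← hpr]; exact List.mem_append_right _ h)
      have hvnerp : v ∉ p := fun h => hvl (by rw [← hpr]; exact List.mem_append_left _ h)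
      have huner : u ∉ r := fun h => hdisj hup h
      refine ⟨L, ⟨?_, ?_, ?_, ?_, ?_⟩, ?_⟩
      · rw [hLdef, List.nodup_append']
        refine ⟨hndp.erase u, ?_, ?_⟩
        · refine List.nodup_cons.mpr ⟨?_, List.nodup_cons.mpr ⟨huner, hndr⟩⟩
          simp only [List.mem_cons]
          rintro (rfl | h)
          · exact hv (hsv hus')
          · exact hvners h
        · intro a ha hb
          have haq := (hqmem a).mp ha
          simp only [List.mem_cons] at hb
          rcases hb with rfl | rfl | hb
          · exact hvnerp haq.2
          · exact haq.1 rfl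
          · exact hdisj haq.2 hb
      · show insert v G.verts = {x | x ∈ L}
        rw [hverts]
        ext x
        simp only [Set.mem_insert_iff, Set.mem_setOf_eq, hLdef, List.mem_append, List.mem_cons]
        rw [hqmem x]
        constructor
        · rintro (rfl | hx)
          · exact Or.inr (Or.inl rfl)
          · rw [← hpr] at hx
            rcases List.mem_append.mp hx with h | h
            · by_cases hxu : x = u
              · exact Or.inr (Or.inr (Or.inl hxu))
              · exact Or.inl ⟨hxu, h⟩
            · exact Or.inr (Or.inr (Or.inr h))
        · rintro (⟨_, hx⟩ | rfl | rfl | hx)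
          · exact Or.inr (by rw [← hpr]; exact List.mem_append_left _ hx)
          · exact Or.inl rfl
          · exact Or.inr (by rw [← hpr]; exact List.mem_append_left _ hup)
          · exact Or.inr (by rw [← hpr]; exact List.mem_append_right _ hx)
      · rw [hLlen]; omega
      · intro a ha b hb hab
        exact hKcl.2 a ((hKtake a).mp ha) b ((hKtake b).mp hb) hab
      · intro i hi hik
        rcases Nat.eq_or_lt_of_le hik with hik' | hik'
        · -- i = k
          subst hik'
          have hgu : L[k]'hi = u := by
            have h1 : L = (q ++ [v]) ++ (u :: r) := by simp [hLdef]
            have h2 : (q ++ [v]).length = k := by simp [hqlen]; omega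
            rw [List.getElem_of_eq h1 hi, List.getElem_append_right (by omega : (q ++ [v]).length ≤ k)]
            simp [h2]
          refine ⟨K, hcard, ?_, hKcl.2⟩
          intro x
          constructor
          · intro hxK
            refine ⟨(hKtake x).mpr hxK, ?_⟩
            rw [hgu]
            by_cases hxv : x = v
            · subst hxv
              exact (hvl' u).mpr hus'
            · have hxK' : x ∈ K' := Finset.mem_erase.mpr ⟨hxv, hxK⟩
              have hxs : x ∈ s := hK's hxK'
              have hxu : x ≠ u := fun e => huK' (e ▸ hxK')
              exact Or.inl (hscl.2 x hxs u hus' hxu)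
          · rintro ⟨hx1, _⟩
            exact (hKtake x).mp hx1
        · -- k < i
          set m := i - (k + 1) with hmdef
          have him : i = (k + 1) + m := by omega
          have hm : m < r.length := by rw [hLlen, hllen] at hi; omega
          have hkm : k + m < l.length := by omega
          have hLf : L = (q ++ [v, u]) ++ r := by simp [hLdef]
          have hql : (q ++ [v, u]).length = k + 1 := by simp [hqlen]; omega
          have ewl : l[k + m]'hkm = r[m]'hm := by
            rw [List.getElem_of_eq hpr.symm hkm, List.getElem_append_right (by omega : p.length ≤ k + m)]
            exact getElem_congr_idx (by omega)
          set w := r[m]'hm with hwdef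
          have hwr : w ∈ r := by rw [hwdef]; exact List.getElem_mem _
          have hwlm : w ∈ l := by rw [← hpr]; exact List.mem_append_right _ hwr
          have hwv : w ≠ v := fun e => hvl (e ▸ hwlm)
          have hwns : w ∉ s := fun h => hdisj ((hpf w).mpr h) hwr
          have e2 : L[i]'hi = w := by
            rw [List.getElem_of_eq hLf hi, List.getElem_append_right (show (q ++ [v, u]).length ≤ i by rw [hql]; omega), hwdef]
            exact getElem_congr_idx (by rw [hql])
          obtain ⟨t, htc, htch, htcl⟩ := hwit (k + m) hkm (by omega)
          have htch' : ∀ x, x ∈ t ↔ x ∈ l.take (k + m) ∧ G.Adj x w := by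
            intro x
            rw [htch x, ewl]
          have etakeL : L.take i = (q ++ [v, u]) ++ r.take m := by
            rw [hLf, him, show k + 1 + m = (q ++ [v, u]).length + m by rw [hql]]
            exact List.take_length_add_append m
          have etakel : l.take (k + m) = p ++ r.take m := by
            rw [← hpr, show k + m = p.length + m by rw [hplen]]
            exact List.take_length_add_append m
          have hmemL : ∀ x, x ∈ L.take i ↔ x = v ∨ x ∈ l.take (k + m) := by
            intro x
            rw [etakeL, etakel]
            simp only [List.mem_append, List.mem_cons, List.not_mem_nil, or_false]
            rw [hqmem x]
            constructor
            · rintro ((⟨_, hxp⟩ | rfl | rfl) | hxr)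
              · exact Or.inr (Or.inl hxp)
              · exact Or.inl rfl
              · exact Or.inr (Or.inl hup)
              · exact Or.inr (Or.inr hxr)
            · rintro (rfl | hxp | hxr)
              · exact Or.inl (Or.inr (Or.inl rfl))
              · by_cases hxu : x = u
                · exact Or.inl (Or.inr (Or.inr hxu))
                · exact Or.inl (Or.inl ⟨hxu, hxp⟩)
              · exact Or.inr hxr
          refine ⟨t, htc, ?_, fun a ha b hb hab => Or.inl (htcl a ha b hb hab)⟩
          intro x
          rw [e2, htch' x, hmemL x]
          constructor
          · rintro ⟨hx1, hx2⟩
            exact ⟨Or.inr hx1, Or.inl hx2⟩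
          · rintro ⟨rfl | hx1, hx2⟩
            · exact absurd ((hvl' w).mp hx2) hwns
            · have hxl : x ∈ l := List.take_subset _ _ hx1
              have hxv : x ≠ v := fun e => hvl (e ▸ hxl)
              exact ⟨hx1, (addVertex_adj_iff hxv hwv).mp hx2⟩
      · ext x
        rw [List.mem_toFinset]
        exact hKtake x
    · -- v ∉ K
      have hKG : IsCliqueIn G K := by
        constructor
        · intro x hx
          rcases Set.mem_insert_iff.mp (hKcl.1 hx) with h | h
          · exact absurd (show v ∈ K by rw [← h]; exact hx) hvK
          · exact h
        · intro a ha b hb hab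
          have hav : a ≠ v := fun e => hvK (e ▸ ha)
          have hbv : b ≠ v := fun e => hvK (e ▸ hb)
          exact (addVertex_adj_iff hav hbv).mp (hKcl.2 a ha b hb hab)
      obtain ⟨l, ⟨hnd, hverts, hlen, hcl, hwit⟩, htake⟩ := ih K hcard hKG
      have hvl : v ∉ l := fun h => hv (by rw [hverts]; exact h)
      refine ⟨l ++ [v], ⟨?_, ?_, ?_, ?_, ?_⟩, ?_⟩
      · rw [List.nodup_append']
        exact ⟨hnd, List.nodup_singleton v,
          fun a ha hb => hvl ((List.mem_singleton.mp hb) ▸ ha)⟩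
      · show insert v G.verts = _
        rw [hverts]
        ext x
        simp [or_comm]
      · simp
        omega
      · rw [List.take_append_of_le_length hlen]
        intro a ha b hb hab
        exact Or.inl (hcl a ha b hb hab)
      · intro i hi hik
        by_cases hil : i < l.length
        · obtain ⟨t, htc, htch, htcl⟩ := hwit i hil hik
          have e1 : (l ++ [v]).take i = l.take i :=
            List.take_append_of_le_length (le_of_lt hil)
          have e2 : (l ++ [v])[i]'hi = l[i]'hil := List.getElem_append_left hil
          refine ⟨t, htc, ?_, fun a ha b hb hab => Or.inl (htcl a ha b hb hab)⟩
          intro x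
          rw [e1, e2, htch x]
          by_cases hxl : x ∈ l.take i
          · have hxv : x ≠ v := fun e => hvl (e ▸ List.take_subset _ _ hxl)
            have hiv : l[i]'hil ≠ v := fun e => hvl (e ▸ List.getElem_mem _)
            simp [hxl, addVertex_adj_iff hxv hiv]
          · simp [hxl]
        · have hi' : i = l.length := by
            simp only [List.length_append, List.length_singleton] at hi
            omega
          subst hi'
          have e2 : (l ++ [v])[l.length]'hi = v := List.getElem_concat_length rfl _
          have e1 : (l ++ [v]).take l.length = l := List.take_left
          refine ⟨s, hs, ?_, fun a ha b hb hab => Or.inl (hscl.2 a ha b hb hab)⟩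
          intro x
          rw [e1, e2, hvr x]
          constructor
          · intro hxs
            refine ⟨?_, hxs⟩
            have hxg : x ∈ G.verts := hsv hxs
            rw [hverts] at hxg
            exact hxg
          · exact And.right
      · rw [List.take_append_of_le_length hlen]
        exact htake
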